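/- arXiv:0809.0536 — 6 statements merged into one kernel-verified Lean document; each statement's English description precedes it below -/
import Mathlib

section
/- For any set of N unit-norm vectors b_1,…,b_N in C^{N_t} with N ≥ N_t, the maximum cross-correlation satisfies max_{l≠n} |b_l^H b_n| ≥ √((N − N_t)/(N_t(N − 1))). -/
open Finset Matrix
open scoped InnerProductSpace ComplexConjugate

/-- Welch bound: the maximum cross-correlation of `N ≥ Nt` unit-norm vectors in `ℂ^Nt`
is at least `√((N − Nt)/(Nt(N − 1)))`. -/
theorem welch_bound (Nt N : ℕ) (hNt : 1 ≤ Nt) (hN : Nt ≤ N) (hN2 : 2 ≤ N)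
    (b : Fin N → EuclideanSpace ℂ (Fin Nt)) (hb : ∀ n, ‖b n‖ = 1) :
    ∃ l n : Fin N, l ≠ n ∧
      Real.sqrt (((N : ℝ) - Nt) / (Nt * ((N : ℝ) - 1))) ≤ ‖⟪b l, b n⟫_ℂ‖ := by
  haveI : NeZero N := ⟨by omega⟩
  by_contra hcon
  push_neg at hcon
  set c : ℝ := ((N : ℝ) - Nt) / (Nt * ((N : ℝ) - 1)) with hc
  have hNt' : (0:ℝ) < Nt := by positivity
  have hN1 : (1:ℝ) ≤ (N:ℝ) - 1 := by
    have : (2:ℝ) ≤ N := by exact_mod_cast hN2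
    linarith
  have hNNt : (0:ℝ) ≤ (N:ℝ) - Nt := by
    have : (Nt:ℝ) ≤ N := by exact_mod_cast hN
    linarith
  have hc0 : 0 ≤ c := by positivity
  -- matrices
  set B : Matrix (Fin Nt) (Fin N) ℂ := Matrix.of fun i n => b n i with hB
  set M : Matrix (Fin Nt) (Fin Nt) ℂ := B * Bᴴ with hM
  set G : Matrix (Fin N) (Fin N) ℂ := Bᴴ * B with hGd
  have hG : ∀ l n, G l n = ⟪b l, b n⟫_ℂ := by
    intro l n
    simp [hGd, hB, Matrix.mul_apply, Matrix.conjTranspose_apply, PiLp.inner_apply,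
      RCLike.inner_apply]
    exact Finset.sum_congr rfl fun _ _ => mul_comm _ _
  have hMherm : M.IsHermitian := Matrix.isHermitian_mul_conjTranspose_self B
  -- trace identity
  have htr : (G * G).trace = (M * M).trace := by
    rw [hGd, hM, Matrix.mul_assoc, Matrix.trace_mul_comm, Matrix.mul_assoc, Matrix.mul_assoc,
      ← Matrix.mul_assoc]
  -- S and T
  set S : ℝ := ∑ l : Fin N, ∑ n : Fin N, ‖⟪b l, b n⟫_ℂ‖ ^ 2 with hS
  set T : ℝ := ∑ i : Fin Nt, ∑ j : Fin Nt, ‖M i j‖ ^ 2 with hT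
  have hScast : (S : ℂ) = (G * G).trace := by
    simp only [Matrix.trace, Matrix.diag, Matrix.mul_apply, hS]
    push_cast
    refine Finset.sum_congr rfl fun l _ => Finset.sum_congr rfl fun n _ => ?_
    rw [hG, hG, ← inner_conj_symm (b n) (b l), Complex.mul_conj']
  have hTcast : (T : ℂ) = (M * M).trace := by
    simp only [Matrix.trace, Matrix.diag, Matrix.mul_apply, hT]
    push_cast
    refine Finset.sum_congr rfl fun i _ => Finset.sum_congr rfl fun j _ => ?_
    have : M j i = conj (M i j) := by
      conv_lhs => rw [← hMherm]
      simp [Matrix.conjTranspose_apply]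
    rw [this, Complex.mul_conj']
  have hST : S = T := by
    have : (S : ℂ) = (T : ℂ) := by rw [hScast, hTcast, htr]
    exact_mod_cast this
  -- trace of M is N
  have htrM : ∑ i : Fin Nt, (M i i).re = (N : ℝ) := by
    have h1 : M.trace = (N : ℂ) := by
      have : M.trace = ∑ n : Fin N, ⟪b n, b n⟫_ℂ := by
        simp only [Matrix.trace, Matrix.diag, hM, Matrix.mul_apply, Matrix.conjTranspose_apply,
          hB, Matrix.of_apply]
        rw [Finset.sum_comm]
        refine Finset.sum_congr rfl fun n _ => ?_
        rw [PiLp.inner_apply]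
        simp [RCLike.inner_apply, mul_comm]
        exact Finset.sum_congr rfl fun _ _ => Complex.mul_conj' _
      rw [this]
      have : ∀ n : Fin N, ⟪b n, b n⟫_ℂ = 1 := by
        intro n
        rw [inner_self_eq_norm_sq_to_K, hb n]
        norm_num
      simp [this, hb]
    have := congrArg Complex.re h1
    simpa [Matrix.trace, Complex.re_sum] using this
  -- Cauchy-Schwarz
  have hCS : (N : ℝ)^2 ≤ Nt * S := by
    have h1 : ((N:ℝ))^2 = (∑ i : Fin Nt, (M i i).re)^2 := by rw [htrM]
    have h2 : (∑ i : Fin Nt, (M i i).re)^2 ≤ (Finset.univ : Finset (Fin Nt)).card *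
        ∑ i : Fin Nt, (M i i).re ^ 2 := sq_sum_le_card_mul_sum_sq
    have h3 : ∑ i : Fin Nt, (M i i).re ^ 2 ≤ ∑ i : Fin Nt, ‖M i i‖ ^ 2 := by
      refine Finset.sum_le_sum fun i _ => ?_
      have := Complex.abs_re_le_norm (M i i)
      have h := sq_le_sq' (neg_le_of_abs_le this) (le_of_abs_le this)
      simpa using h
    have h4 : ∑ i : Fin Nt, ‖M i i‖ ^ 2 ≤ T := by
      rw [hT]
      refine Finset.sum_le_sum fun i _ => ?_
      exact Finset.single_le_sum (f := fun j => ‖M i j‖ ^ 2) (fun j _ => by positivity) (Finset.mem_univ i)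
    calc ((N:ℝ))^2 = (∑ i : Fin Nt, (M i i).re)^2 := h1
      _ ≤ (Finset.univ : Finset (Fin Nt)).card * ∑ i : Fin Nt, (M i i).re ^ 2 := h2
      _ ≤ Nt * ∑ i : Fin Nt, ‖M i i‖ ^ 2 := by
          simp only [Finset.card_univ, Fintype.card_fin]
          exact mul_le_mul_of_nonneg_left h3 (by positivity)
      _ ≤ Nt * T := mul_le_mul_of_nonneg_left h4 (by positivity)
      _ = Nt * S := by rw [hST]
  -- upper bound on S from assumption
  have hSlt : S < N * (1 + ((N:ℝ) - 1) * c) := by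
    have hrow : ∀ l : Fin N, ∑ n : Fin N, ‖⟪b l, b n⟫_ℂ‖ ^ 2 < 1 + ((N:ℝ) - 1) * c := by
      intro l
      rw [← Finset.sum_erase_add _ _ (Finset.mem_univ l)]
      have hdiag : ‖⟪b l, b l⟫_ℂ‖ ^ 2 = 1 := by
        rw [inner_self_eq_norm_sq_to_K, hb l]
        norm_num
      have hoff : ∑ n ∈ Finset.univ.erase l, ‖⟪b l, b n⟫_ℂ‖ ^ 2 < ((N:ℝ) - 1) * c := by
        have hne : (Finset.univ.erase l).Nonempty := by
          rw [← Finset.card_pos, Finset.card_erase_of_mem (Finset.mem_univ l)]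
          simp only [Finset.card_univ, Fintype.card_fin]
          omega
        have := Finset.sum_lt_sum_of_nonempty hne (f := fun n => ‖⟪b l, b n⟫_ℂ‖ ^ 2)
          (g := fun _ => c) ?_
        · have hcard : ((Finset.univ.erase l).card : ℝ) = (N:ℝ) - 1 := by
            rw [Finset.card_erase_of_mem (Finset.mem_univ l)]
            simp only [Finset.card_univ, Fintype.card_fin]
            have : (1:ℕ) ≤ N := by omega
            push_cast [Nat.cast_sub this]
            ring
          calc ∑ n ∈ Finset.univ.erase l, ‖⟪b l, b n⟫_ℂ‖ ^ 2
              < ∑ _n ∈ Finset.univ.erase l, c := this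
            _ = ((Finset.univ.erase l).card : ℝ) * c := by
                rw [Finset.sum_const, nsmul_eq_mul]
            _ = ((N:ℝ) - 1) * c := by rw [hcard]
        · intro n hn
          have hnl : n ≠ l := Finset.ne_of_mem_erase hn
          have h := hcon l n (Ne.symm hnl)
          have : ‖⟪b l, b n⟫_ℂ‖ ^ 2 < Real.sqrt c ^ 2 := by
            apply sq_lt_sq' _ h
            have : 0 ≤ ‖⟪b l, b n⟫_ℂ‖ := norm_nonneg _
            nlinarith [Real.sqrt_nonneg c]
          rwa [Real.sq_sqrt hc0] at this
      linarith [hdiag, hoff]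
    calc S < ∑ _l : Fin N, (1 + ((N:ℝ) - 1) * c) := by
          rw [hS]
          exact Finset.sum_lt_sum_of_nonempty
            (Finset.univ_nonempty) (fun l _ => hrow l)
      _ = N * (1 + ((N:ℝ) - 1) * c) := by
          rw [Finset.sum_const, nsmul_eq_mul]
          simp
  -- combine
  have hfinal : N * (1 + ((N:ℝ) - 1) * c) = (N:ℝ)^2 / Nt := by
    rw [hc]
    field_simp
    ring
  have hS2 : (N:ℝ)^2 / Nt ≤ S := by
    rw [div_le_iff₀ hNt']
    linarith [hCS]
  rw [hfinal] at hSlt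
  linarith
end

section
/- The 7 vectors b_n = (1/√3)(e^{2πi·n·0/7}, e^{2πi·n·1/7}, e^{2πi·n·5/7})^T for n = 1,…,7 in C³ are unit-norm and equiangular with |b_l^H b_n| = √2/3 = √(3−1)/3 for all l ≠ n, achieving the Welch bound √((7−3)/(3·6)) = √(2/9). -/
open Complex Real

lemma norm_key (z : ℂ) (h7 : z^7 = 1) (h1 : z ≠ 1) : ‖1 + z + z^5‖ = Real.sqrt 2 := by
  have hgeom : 1 + z + z^2 + z^3 + z^4 + z^5 + z^6 = 0 := by
    have h := geom_sum_eq h1 7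
    rw [h7, sub_self, zero_div] at h
    simp [Finset.sum_range_succ] at h
    linear_combination h
  have hz0 : z ≠ 0 := by
    intro h; rw [h] at h7; norm_num at h7
  have hnormsq : Complex.normSq z = 1 := by
    have h : (Complex.normSq z)^7 = 1 := by
      rw [← map_pow, h7, Complex.normSq_one]
    nlinarith [Complex.normSq_nonneg z, sq_nonneg (Complex.normSq z - 1),
      sq_nonneg (Complex.normSq z + 1), sq_nonneg ((Complex.normSq z)^2 - 1),
      sq_nonneg ((Complex.normSq z)^3 - 1), sq_nonneg ((Complex.normSq z)^3 + 1)]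
  have hconj : (starRingEnd ℂ) z = z^6 := by
    have h : z * (starRingEnd ℂ) z = 1 := by
      rw [Complex.mul_conj, hnormsq]; norm_num
    have hz6 : z * z^6 = 1 := by rw [← pow_succ']; exact h7
    exact mul_left_cancel₀ hz0 (h.trans hz6.symm)
  have hsq : Complex.normSq (1 + z + z^5) = 2 := by
    have hc : ((Complex.normSq (1 + z + z^5) : ℝ) : ℂ) = 2 := by
      rw [← Complex.mul_conj]
      simp only [map_add, map_one, map_pow, hconj]
      linear_combination (2 + z^4 + (1 + z + z^5) * z^2 * (z^21 + z^14 + z^7 + 1)) * h7 + hgeom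
    exact_mod_cast hc
  rw [Complex.norm_def, hsq]

/-- The harmonic frame from the difference set `{0,1,5}` mod 7 is a unit-norm
equiangular frame of 7 vectors in `ℂ³` with coherence `√2/3`, achieving the Welch bound. -/
theorem grassmannian_frame_3_7
    (d : Fin 3 → ℕ) (hd : d = ![0, 1, 5])
    (b : Fin 7 → Fin 3 → ℂ)
    (hb : ∀ (n : Fin 7) (i : Fin 3),
      b n i = (1 / (Real.sqrt 3 : ℂ)) *
        Complex.exp (2 * Real.pi * Complex.I * ((n : ℕ) + 1) * (d i) / 7)) :
    (∀ n, Real.sqrt (∑ i, ‖b n i‖ ^ 2) = 1) ∧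
    (∀ l n : Fin 7, l ≠ n →
      ‖∑ i, (starRingEnd ℂ) (b l i) * b n i‖ = Real.sqrt 2 / 3) ∧
    Real.sqrt 2 / 3 = Real.sqrt ((7 - 3 : ℝ) / (3 * (7 - 1))) := by
  have hs3 : Real.sqrt 3 ≠ 0 := by positivity
  have hnormb : ∀ (n : Fin 7) (i : Fin 3), ‖b n i‖ = 1 / Real.sqrt 3 := by
    intro n i
    rw [hb]
    have harg : 2 * (Real.pi : ℂ) * Complex.I * ((n : ℕ) + 1) * (d i) / 7
        = ((2 * Real.pi * ((n : ℕ) + 1) * (d i) / 7 : ℝ) : ℂ) * Complex.I := by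
      push_cast; ring
    rw [harg, norm_mul,
      Complex.norm_exp_ofReal_mul_I]
    simp [Complex.norm_real, _root_.abs_of_nonneg (Real.sqrt_nonneg 3)]
  refine ⟨?_, ?_, ?_⟩
  · intro n
    have : ∑ i, ‖b n i‖ ^ 2 = 1 := by
      simp [Fin.sum_univ_three, hnormb, div_pow, Real.sq_sqrt (by norm_num : (3:ℝ) ≥ 0)]
    rw [this, Real.sqrt_one]
  · intro l n hln
    set k : ℤ := (n : ℕ) - (l : ℕ) with hk
    set z : ℂ := Complex.exp (2 * Real.pi * Complex.I * k / 7) with hzdef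
    have hz7 : z ^ 7 = 1 := by
      rw [hzdef, ← Complex.exp_nat_mul]
      rw [show ((7:ℕ) : ℂ) * (2 * Real.pi * Complex.I * k / 7) = (k : ℂ) * (2 * Real.pi * Complex.I) by push_cast; ring]
      exact Complex.exp_int_mul_two_pi_mul_I k
    have hz1 : z ≠ 1 := by
      intro h
      rw [hzdef, Complex.exp_eq_one_iff] at h
      obtain ⟨m, hm⟩ := h
      have h2 : (2 * (Real.pi:ℂ) * Complex.I) * (k : ℂ) = (2 * (Real.pi:ℂ) * Complex.I) * (7 * m) := by
        linear_combination 7 * hm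
      have hne : (2 * (Real.pi:ℂ) * Complex.I) ≠ 0 := by
        simp [Real.pi_ne_zero, Complex.I_ne_zero]
      have h3 : (k : ℂ) = ((7 * m : ℤ) : ℂ) := by push_cast; exact mul_left_cancel₀ hne h2
      have h4 : k = 7 * m := by exact_mod_cast h3
      have hne' : (n : ℕ) ≠ (l : ℕ) := fun h => hln (Fin.ext h.symm)
      have h5 : (n : ℕ) < 7 := n.isLt
      have h6 : (l : ℕ) < 7 := l.isLt
      omega
    have hterm : ∀ i : Fin 3, (starRingEnd ℂ) (b l i) * b n i = (1/3 : ℂ) * z ^ (d i) := by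
      intro i
      rw [hb, hb]
      have hcexp : (starRingEnd ℂ) (Complex.exp (2 * Real.pi * Complex.I * ((l : ℕ) + 1) * (d i) / 7))
          = Complex.exp (-(2 * Real.pi * Complex.I * ((l : ℕ) + 1) * (d i) / 7)) := by
        rw [← Complex.exp_conj]
        congr 1
        simp [map_div₀, map_mul, Complex.conj_ofReal, Complex.conj_I, map_ofNat]
        ring
      rw [map_mul, hcexp]
      have hc1 : (starRingEnd ℂ) (1 / (Real.sqrt 3 : ℂ)) = 1 / (Real.sqrt 3 : ℂ) := by
        simp [map_div₀, Complex.conj_ofReal]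
      rw [hc1]
      have hzd : z ^ (d i) = Complex.exp (2 * Real.pi * Complex.I * ((n : ℕ) + 1) * (d i) / 7
          + -(2 * Real.pi * Complex.I * ((l : ℕ) + 1) * (d i) / 7)) := by
        rw [hzdef, ← Complex.exp_nat_mul]
        congr 1
        push_cast [hk]
        ring
      rw [hzd, Complex.exp_add]
      have h13 : (1 / (Real.sqrt 3 : ℂ)) * (1 / (Real.sqrt 3 : ℂ)) = 1/3 := by
        rw [div_mul_div_comm, one_mul, ← Complex.ofReal_mul,
          Real.mul_self_sqrt (by norm_num : (0:ℝ) ≤ 3)]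
        norm_num
      calc (1 / (Real.sqrt 3:ℂ)) * Complex.exp (-(2 * Real.pi * Complex.I * ((l:ℕ) + 1) * (d i) / 7)) *
            ((1 / (Real.sqrt 3:ℂ)) * Complex.exp (2 * Real.pi * Complex.I * ((n:ℕ) + 1) * (d i) / 7))
          = ((1 / (Real.sqrt 3:ℂ)) * (1 / (Real.sqrt 3:ℂ))) *
            (Complex.exp (2 * Real.pi * Complex.I * ((n:ℕ) + 1) * (d i) / 7) *
             Complex.exp (-(2 * Real.pi * Complex.I * ((l:ℕ) + 1) * (d i) / 7))) := by ring
        _ = _ := by rw [h13]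
    have hsum : ∑ i, (starRingEnd ℂ) (b l i) * b n i = (1/3 : ℂ) * (1 + z + z^5) := by
      rw [Fin.sum_univ_three, hterm, hterm, hterm]
      subst hd
      norm_num
      rw [show (![0, 1, 5] : Fin 3 → ℕ) 2 = 5 from rfl]
      ring
    rw [hsum, norm_mul, norm_key z hz7 hz1]
    simp
    ring
  · rw [show ((7 - 3 : ℝ) / (3 * (7 - 1))) = 2 / 9 by norm_num]
    rw [Real.sqrt_div (by norm_num : (0:ℝ) ≤ 2)]
    rw [show (9:ℝ) = 3^2 by norm_num, Real.sqrt_sq (by norm_num : (0:ℝ) ≤ 3)]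
end

section
/- The 13 vectors b_n = (1/2)(e^{2πi·n·0/13}, e^{2πi·n·1/13}, e^{2πi·n·3/13}, e^{2πi·n·9/13})^T for n = 1,…,13 in C⁴ are unit-norm and equiangular with |b_l^H b_n| = √3/4 for all l ≠ n, achieving the Welch bound √((13−4)/(4·12)) = √(3/16). -/
open Complex Real

lemma diffset_key (ζ : ℂ) (h13 : ζ^13 = 1) (h1 : ζ ≠ 1) :
    (1 + ζ + ζ^3 + ζ^9) * (1 + ζ^12 + ζ^10 + ζ^4) = 3 := by
  have hs : 1+ζ+ζ^2+ζ^3+ζ^4+ζ^5+ζ^6+ζ^7+ζ^8+ζ^9+ζ^10+ζ^11+ζ^12 = 0 := by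
    have h : (ζ - 1) * (1+ζ+ζ^2+ζ^3+ζ^4+ζ^5+ζ^6+ζ^7+ζ^8+ζ^9+ζ^10+ζ^11+ζ^12) = 0 := by
      linear_combination h13
    rcases mul_eq_zero.mp h with h' | h'
    · exact absurd (sub_eq_zero.mp h') h1
    · exact h'
  linear_combination hs + (3 + ζ^2 + ζ^6 + ζ^8) * h13

/-- The harmonic frame from the difference set `{0,1,3,9}` mod 13 is a unit-norm
equiangular frame of 13 vectors in `ℂ⁴` with coherence `√3/4`, achieving the Welch bound. -/
theorem grassmannian_frame_4_13
    (d : Fin 4 → ℕ) (hd : d = ![0, 1, 3, 9])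
    (b : Fin 13 → Fin 4 → ℂ)
    (hb : ∀ (n : Fin 13) (i : Fin 4),
      b n i = (1 / 2 : ℂ) *
        Complex.exp (2 * Real.pi * Complex.I * ((n : ℕ) + 1) * (d i) / 13)) :
    (∀ n, Real.sqrt (∑ i, ‖b n i‖ ^ 2) = 1) ∧
    (∀ l n : Fin 13, l ≠ n →
      ‖∑ i, (starRingEnd ℂ) (b l i) * b n i‖ = Real.sqrt 3 / 4) ∧
    Real.sqrt 3 / 4 = Real.sqrt ((13 - 4 : ℝ) / (4 * (13 - 1))) := by
  refine ⟨?_, ?_, ?_⟩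
  · -- unit norm
    intro n
    have hnorm : ∀ i : Fin 4, ‖b n i‖ = 1/2 := by
      intro i
      rw [hb, norm_mul, Complex.norm_exp]
      have : (2 * (Real.pi:ℂ) * Complex.I * ((n:ℕ) + 1) * (d i) / 13).re = 0 := by
        simp [Complex.div_re, Complex.mul_re, Complex.mul_im]
      rw [this]
      norm_num
    rw [Fin.sum_univ_four, hnorm, hnorm, hnorm, hnorm]
    norm_num
  · -- equiangular
    intro l n hln
    set m : ℤ := (n : ℕ) - (l : ℕ) with hm
    set ζ : ℂ := Complex.exp (2*Real.pi*Complex.I*m/13) with hζ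
    have hm0 : m ≠ 0 := by
      simp only [hm, sub_ne_zero]
      intro h
      exact hln (Fin.ext (by exact_mod_cast h.symm))
    have hmabs : m.natAbs < 13 := by
      have h1 := n.isLt; have h2 := l.isLt; omega
    have h13 : ζ ^ 13 = 1 := by
      rw [hζ, ← Complex.exp_nat_mul,
        show (13:ℕ) * (2*Real.pi*Complex.I*m/13) = m * (2*Real.pi*Complex.I) by
          push_cast; ring]
      exact Complex.exp_int_mul_two_pi_mul_I m
    have h1 : ζ ≠ 1 := by
      intro h
      rw [hζ, Complex.exp_eq_one_iff] at h
      obtain ⟨k, hk⟩ := h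
      have hπ : (Real.pi : ℂ) ≠ 0 := by exact_mod_cast Real.pi_ne_zero
      have hne : (2*(Real.pi:ℂ)*Complex.I) ≠ 0 := by
        simp [hπ, Complex.I_ne_zero]
      have h3 : (2*(Real.pi:ℂ)*Complex.I) * m = (2*(Real.pi:ℂ)*Complex.I) * (13*k) := by
        field_simp at hk
        linear_combination (2*(Real.pi:ℂ)*Complex.I) * hk
      have h2 : (m : ℂ) = 13 * k := mul_left_cancel₀ hne h3
      have : m = 13 * k := by exact_mod_cast h2
      omega
    have hentry : ∀ i : Fin 4, (starRingEnd ℂ) (b l i) * b n i = (1/4 : ℂ) * ζ ^ (d i) := by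
      intro i
      have hconj : (starRingEnd ℂ) (2 * (Real.pi:ℂ) * Complex.I * ((l:ℕ) + 1) * (d i) / 13)
          = -(2 * (Real.pi:ℂ) * Complex.I * ((l:ℕ) + 1) * (d i) / 13) := by
        simp [Complex.ext_iff, Complex.div_re, Complex.div_im, Complex.mul_re,
          Complex.mul_im]
        ring
      rw [hb, hb, map_mul, ← Complex.exp_conj, hconj, hζ, ← Complex.exp_nat_mul,
        mul_mul_mul_comm, ← Complex.exp_add]
      congr 1
      · rw [show ((starRingEnd ℂ) (1/2 : ℂ)) = (1/2 : ℂ) by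
          simp [Complex.ext_iff]]
        norm_num
      · rw [hm]
        push_cast
        ring
    rw [Fin.sum_univ_four, hentry, hentry, hentry, hentry, hd]
    simp only [Matrix.cons_val_zero, Matrix.cons_val_one, Matrix.head_cons,
      Matrix.cons_val_two, Matrix.tail_cons, Matrix.cons_val_three]
    rw [show (1/4:ℂ) * ζ^0 + (1/4:ℂ) * ζ^1 + (1/4:ℂ) * ζ^3 + (1/4:ℂ) * ζ^9
        = (1/4 : ℂ) * (1 + ζ + ζ^3 + ζ^9) by ring]
    rw [norm_mul]
    have hT : ‖(1 + ζ + ζ^3 + ζ^9 : ℂ)‖ = Real.sqrt 3 := by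
      have hinv : (starRingEnd ℂ) ζ = ζ^12 := by
        have hc : (starRingEnd ℂ) ζ = ζ⁻¹ := by
          rw [hζ, ← Complex.exp_conj, ← Complex.exp_neg]
          congr 1
          simp [Complex.ext_iff, Complex.div_re, Complex.div_im, Complex.mul_re,
            Complex.mul_im]
          ring
        rw [hc]
        exact inv_eq_of_mul_eq_one_left (by rw [← pow_succ]; exact h13)
      have hconjT : (starRingEnd ℂ) (1 + ζ + ζ^3 + ζ^9) = 1 + ζ^12 + ζ^10 + ζ^4 := by
        rw [map_add, map_add, map_add, map_pow, map_pow, hinv, map_one]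
        have h36 : (ζ^12)^3 = ζ^10 := by linear_combination (ζ^23 + ζ^10) * h13
        have h108 : (ζ^12)^9 = ζ^4 := by
          linear_combination (ζ^95 + ζ^82 + ζ^69 + ζ^56 + ζ^43 + ζ^30 + ζ^17 + ζ^4) * h13
        rw [h36, h108]
      have hsq : Complex.normSq (1 + ζ + ζ^3 + ζ^9) = 3 := by
        have := Complex.mul_conj (1 + ζ + ζ^3 + ζ^9)
        rw [hconjT, diffset_key ζ h13 h1] at this
        exact_mod_cast this.symm
      rw [Complex.norm_def, hsq]
    rw [hT]
    norm_num
    ring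
  · -- Welch bound value
    rw [show ((13:ℝ) - 4) / (4 * (13 - 1)) = 3/16 by norm_num,
      show (3:ℝ)/16 = (Real.sqrt 3 / 4)^2 by
        rw [div_pow, Real.sq_sqrt (by norm_num : (0:ℝ) ≤ 3)]; norm_num,
      Real.sqrt_sq (by positivity)]
end

section
/- The matrix D = (1/2)·[[−i,−i,−i,−i],[1,−1,1,−1],[−i,−i,i,i],[−1,1,1,−1]] is unitary, and the four bases given by the columns of D, D², D³, D⁴ are pairwise mutually unbiased in C⁴: any inner product between a column of D^a and a column of D^b with 1 ≤ a < b ≤ 4 has absolute value 1/2. -/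
open Complex Matrix

private noncomputable def M1 : Matrix (Fin 4) (Fin 4) ℂ :=
  !![-Complex.I, -Complex.I, -Complex.I, -Complex.I;
     1, -1, 1, -1;
     -Complex.I, -Complex.I, Complex.I, Complex.I;
     -1, 1, 1, -1]

private noncomputable def M2 : Matrix (Fin 4) (Fin 4) ℂ :=
  !![-1,-1,-Complex.I,Complex.I;
     -Complex.I,-Complex.I,-1,1;
     -Complex.I,Complex.I,-1,-1;
     1,-1,Complex.I,Complex.I]

private noncomputable def M3 : Matrix (Fin 4) (Fin 4) ℂ :=
  !![-1,Complex.I,Complex.I,1;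
     -1,Complex.I,-Complex.I,-1;
     Complex.I,-1,-1,-Complex.I;
     -Complex.I,1,-1,-Complex.I]

private noncomputable def M4 : Matrix (Fin 4) (Fin 4) ℂ :=
  !![Complex.I,1,Complex.I,-1;
     Complex.I,-1,Complex.I,1;
     Complex.I,1,-Complex.I,1;
     Complex.I,-1,-Complex.I,-1]

private lemma norm_half (z : ℂ) (h : z.re*z.re + z.im*z.im = 1/4) : ‖z‖ = 1/2 := by
  rw [Complex.norm_def, Complex.normSq_apply, h,
    show (1/4:ℝ) = (1/2)^2 by norm_num, Real.sqrt_sq (by norm_num)]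

private lemma h21 : M1 * M1 = (2:ℂ) • M2 := by
  ext i j
  fin_cases i <;> fin_cases j <;>
    simp [M1, M2, Matrix.mul_apply, Matrix.vecHead, Matrix.vecTail, Fin.sum_univ_four] <;> ring_nf

private lemma h31 : M2 * M1 = (2:ℂ) • M3 := by
  ext i j
  fin_cases i <;> fin_cases j <;>
    simp [M1, M2, M3, Matrix.mul_apply, Matrix.vecHead, Matrix.vecTail, Fin.sum_univ_four] <;> ring_nf

private lemma h41 : M3 * M1 = (2:ℂ) • M4 := by
  ext i j
  fin_cases i <;> fin_cases j <;>
    simp [M1, M3, M4, Matrix.mul_apply, Matrix.vecHead, Matrix.vecTail, Fin.sum_univ_four] <;> ring_nf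

private lemma hu : M1ᴴ * M1 = (4:ℂ) • 1 := by
  ext i j
  fin_cases i <;> fin_cases j <;>
    simp [M1, Matrix.mul_apply, Matrix.conjTranspose_apply, Matrix.vecHead, Matrix.vecTail,
      Fin.sum_univ_four] <;> ring_nf

set_option maxHeartbeats 1000000 in
private lemma p12 : ∀ l n : Fin 4,
    ‖∑ i : Fin 4, (starRingEnd ℂ) (((1/2:ℂ) • M1) i l) * (((1/2:ℂ) • M2) i n)‖ = 1/2 := by
  intro l n
  fin_cases l <;> fin_cases n <;>
  · apply norm_half
    simp [M1, M2, Fin.sum_univ_four, Matrix.smul_apply, Matrix.vecHead, Matrix.vecTail]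
    norm_num

set_option maxHeartbeats 1000000 in
private lemma p13 : ∀ l n : Fin 4,
    ‖∑ i : Fin 4, (starRingEnd ℂ) (((1/2:ℂ) • M1) i l) * (((1/2:ℂ) • M3) i n)‖ = 1/2 := by
  intro l n
  fin_cases l <;> fin_cases n <;>
  · apply norm_half
    simp [M1, M3, Fin.sum_univ_four, Matrix.smul_apply, Matrix.vecHead, Matrix.vecTail]
    norm_num

set_option maxHeartbeats 1000000 in
private lemma p14 : ∀ l n : Fin 4,
    ‖∑ i : Fin 4, (starRingEnd ℂ) (((1/2:ℂ) • M1) i l) * (((1/2:ℂ) • M4) i n)‖ = 1/2 := by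
  intro l n
  fin_cases l <;> fin_cases n <;>
  · apply norm_half
    simp [M1, M4, Fin.sum_univ_four, Matrix.smul_apply, Matrix.vecHead, Matrix.vecTail]
    norm_num

set_option maxHeartbeats 1000000 in
private lemma p23 : ∀ l n : Fin 4,
    ‖∑ i : Fin 4, (starRingEnd ℂ) (((1/2:ℂ) • M2) i l) * (((1/2:ℂ) • M3) i n)‖ = 1/2 := by
  intro l n
  fin_cases l <;> fin_cases n <;>
  · apply norm_half
    simp [M2, M3, Fin.sum_univ_four, Matrix.smul_apply, Matrix.vecHead, Matrix.vecTail]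
    norm_num

set_option maxHeartbeats 1000000 in
private lemma p24 : ∀ l n : Fin 4,
    ‖∑ i : Fin 4, (starRingEnd ℂ) (((1/2:ℂ) • M2) i l) * (((1/2:ℂ) • M4) i n)‖ = 1/2 := by
  intro l n
  fin_cases l <;> fin_cases n <;>
  · apply norm_half
    simp [M2, M4, Fin.sum_univ_four, Matrix.smul_apply, Matrix.vecHead, Matrix.vecTail]
    norm_num

set_option maxHeartbeats 1000000 in
private lemma p34 : ∀ l n : Fin 4,
    ‖∑ i : Fin 4, (starRingEnd ℂ) (((1/2:ℂ) • M3) i l) * (((1/2:ℂ) • M4) i n)‖ = 1/2 := by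
  intro l n
  fin_cases l <;> fin_cases n <;>
  · apply norm_half
    simp [M3, M4, Fin.sum_univ_four, Matrix.smul_apply, Matrix.vecHead, Matrix.vecTail]
    norm_num

/-- The concrete `4×4` matrix `D` is unitary and the bases given by the columns of
`D, D², D³, D⁴` are pairwise mutually unbiased in `ℂ⁴`. -/
theorem mub_4x4 (D : Matrix (Fin 4) (Fin 4) ℂ)
    (hD : D = (1 / 2 : ℂ) •
      !![-Complex.I, -Complex.I, -Complex.I, -Complex.I;
         1, -1, 1, -1;
         -Complex.I, -Complex.I, Complex.I, Complex.I;
         -1, 1, 1, -1]) :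
    Dᴴ * D = 1 ∧
    ∀ a b : ℕ, 1 ≤ a → a < b → b ≤ 4 → ∀ l n : Fin 4,
      ‖∑ i : Fin 4, (starRingEnd ℂ) ((D ^ a) i l) * ((D ^ b) i n)‖ = 1 / 2 := by
  have hD' : D = (1 / 2 : ℂ) • M1 := hD
  have e1 : D ^ 1 = (1 / 2 : ℂ) • M1 := by rw [pow_one, hD']
  have e2 : D ^ 2 = (1 / 2 : ℂ) • M2 := by
    rw [pow_two, hD', Matrix.smul_mul, Matrix.mul_smul, h21, smul_smul, smul_smul]
    norm_num
  have e3 : D ^ 3 = (1 / 2 : ℂ) • M3 := by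
    rw [pow_succ, e2, hD',
      Matrix.smul_mul, Matrix.mul_smul, h31, smul_smul, smul_smul]
    norm_num
  have e4 : D ^ 4 = (1 / 2 : ℂ) • M4 := by
    rw [pow_succ, e3, hD',
      Matrix.smul_mul, Matrix.mul_smul, h41, smul_smul, smul_smul]
    norm_num
  constructor
  · rw [hD', Matrix.conjTranspose_smul, Matrix.smul_mul, Matrix.mul_smul, hu,
      smul_smul, smul_smul]
    norm_num
  · intro a b ha hab hb l n
    interval_cases b <;> interval_cases a
    · rw [e1, e2]; exact p12 l n
    · rw [e1, e3]; exact p13 l n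
    · rw [e2, e3]; exact p23 l n
    · rw [e1, e4]; exact p14 l n
    · rw [e2, e4]; exact p24 l n
    · rw [e3, e4]; exact p34 l n
end

section
/- The 16-column beamforming matrix B_M = [D, D², D³, D⁴] built from the 4×4 matrix D above has maximum cross-correlation δ(B_M) = 1/2 over all pairs of distinct columns, which exceeds the Welch bound √((16−4)/(4·15)) = 1/√5 ≈ 0.4472. -/
open Complex Matrix

set_option maxHeartbeats 0

private lemma normSq_le_imp_norm_le (z : ℂ) (h : Complex.normSq z ≤ 1/4) : ‖z‖ ≤ 1/2 := by
  nlinarith [Complex.sq_norm z, norm_nonneg z]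

/-- The 16-column MUB beamforming matrix `B_M = [D, D², D³, D⁴]` has maximum
cross-correlation `1/2` over distinct columns, which exceeds the Welch bound
`√((16−4)/(4·15)) = 1/√5`. -/
theorem mub_beamforming_coherence (D : Matrix (Fin 4) (Fin 4) ℂ)
    (hD : D = (1 / 2 : ℂ) •
      !![-Complex.I, -Complex.I, -Complex.I, -Complex.I;
         1, -1, 1, -1;
         -Complex.I, -Complex.I, Complex.I, Complex.I;
         -1, 1, 1, -1])
    (B : Matrix (Fin 4) (Fin 16) ℂ)
    (hB : ∀ (i : Fin 4) (n : Fin 16),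
      B i n = (D ^ ((n : ℕ) / 4 + 1)) i ⟨(n : ℕ) % 4, Nat.mod_lt _ (by norm_num)⟩) :
    (∀ l n : Fin 16, l ≠ n →
      ‖∑ i : Fin 4, (starRingEnd ℂ) (B i l) * B i n‖ ≤ 1 / 2) ∧
    (∃ l n : Fin 16, l ≠ n ∧
      ‖∑ i : Fin 4, (starRingEnd ℂ) (B i l) * B i n‖ = 1 / 2) ∧
    Real.sqrt ((16 - 4 : ℝ) / (4 * 15)) = 1 / Real.sqrt 5 ∧
    1 / Real.sqrt 5 < 1 / 2 := by
  have h1 : D ^ 1 = (1 / 2 : ℂ) •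
      !![-Complex.I, -Complex.I, -Complex.I, -Complex.I;
         1, -1, 1, -1;
         -Complex.I, -Complex.I, Complex.I, Complex.I;
         -1, 1, 1, -1] := by rw [pow_one, hD]
  have h2 : D ^ 2 = (1 / 2 : ℂ) •
      !![-1, -1, -Complex.I, Complex.I;
         -Complex.I, -Complex.I, -1, 1;
         -Complex.I, Complex.I, -1, -1;
         1, -1, Complex.I, Complex.I] := by
    have : D ^ 2 = D ^ 1 * D ^ 1 := by rw [← pow_add]
    rw [this, h1]
    ext i j
    fin_cases i <;> fin_cases j <;>
      simp [Matrix.mul_apply, Fin.sum_univ_four, Matrix.smul_apply,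
        Matrix.cons_val_zero, Matrix.cons_val_one, Matrix.head_cons,
        Matrix.head_fin_const, Matrix.cons_val_fin_one, Matrix.cons_val_two,
        Matrix.cons_val_three, Matrix.vecHead, Matrix.vecTail] <;> ring_nf <;>
      simp [Complex.I_sq] <;> ring
  have h3 : D ^ 3 = (1 / 2 : ℂ) •
      !![-1, Complex.I, Complex.I, 1;
         -1, Complex.I, -Complex.I, -1;
         Complex.I, -1, -1, -Complex.I;
         -Complex.I, 1, -1, -Complex.I] := by
    have : D ^ 3 = D ^ 2 * D ^ 1 := by rw [← pow_add]
    rw [this, h1, h2]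
    ext i j
    fin_cases i <;> fin_cases j <;>
      simp [Matrix.mul_apply, Fin.sum_univ_four, Matrix.smul_apply,
        Matrix.cons_val_zero, Matrix.cons_val_one, Matrix.head_cons,
        Matrix.head_fin_const, Matrix.cons_val_fin_one, Matrix.cons_val_two,
        Matrix.cons_val_three, Matrix.vecHead, Matrix.vecTail] <;> ring_nf <;>
      simp [Complex.I_sq] <;> ring
  have h4 : D ^ 4 = (1 / 2 : ℂ) •
      !![Complex.I, 1, Complex.I, -1;
         Complex.I, -1, Complex.I, 1;
         Complex.I, 1, -Complex.I, 1;
         Complex.I, -1, -Complex.I, -1] := by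
    have : D ^ 4 = D ^ 2 * D ^ 2 := by rw [← pow_add]
    rw [this, h2]
    ext i j
    fin_cases i <;> fin_cases j <;>
      simp [Matrix.mul_apply, Fin.sum_univ_four, Matrix.smul_apply,
        Matrix.cons_val_zero, Matrix.cons_val_one, Matrix.head_cons,
        Matrix.head_fin_const, Matrix.cons_val_fin_one, Matrix.cons_val_two,
        Matrix.cons_val_three, Matrix.vecHead, Matrix.vecTail] <;> ring_nf <;>
      simp [Complex.I_sq] <;> ring
  have hsymm : ∀ l n : Fin 16,
      (∑ i : Fin 4, (starRingEnd ℂ) (B i n) * B i l) =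
        (starRingEnd ℂ) (∑ i : Fin 4, (starRingEnd ℂ) (B i l) * B i n) := by
    intro l n
    rw [map_sum]
    exact Finset.sum_congr rfl fun i _ => by
      rw [RingHom.map_mul, Complex.conj_conj, mul_comm]
  have haux : ∀ l n : Fin 16, (l : ℕ) < (n : ℕ) →
      Complex.normSq (∑ i : Fin 4, (starRingEnd ℂ) (B i l) * B i n) ≤ 1/4 := by
    intro l n hln
    fin_cases l <;> fin_cases n <;> (try (exfalso; revert hln; decide)) <;>
    · simp only [hB, Fin.sum_univ_four]
      norm_num [h1, h2, h3, h4, Matrix.smul_apply, Matrix.cons_val_zero,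
        Matrix.cons_val_one, Matrix.head_cons, Matrix.head_fin_const,
        Matrix.cons_val_fin_one, Matrix.cons_val_two, Matrix.cons_val_three,
        Matrix.vecHead, Matrix.vecTail]
      all_goals norm_num [Complex.normSq_apply]
  refine ⟨?_, ?_, ?_, ?_⟩
  · intro l n hln
    apply normSq_le_imp_norm_le
    rcases lt_or_gt_of_ne (fun h => hln (Fin.ext h) : (l : ℕ) ≠ (n : ℕ)) with h | h
    · exact haux l n h
    · rw [show (∑ i : Fin 4, (starRingEnd ℂ) (B i l) * B i n) =
          (starRingEnd ℂ) (∑ i : Fin 4, (starRingEnd ℂ) (B i n) * B i l) from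
            hsymm n l, Complex.normSq_conj]
      exact haux n l h
  · refine ⟨0, 4, by decide, ?_⟩
    have hv : (∑ i : Fin 4, (starRingEnd ℂ) (B i 0) * B i 4) = -Complex.I / 2 := by
      simp only [hB, show ((0 : Fin 16) : ℕ) = 0 from rfl,
        show ((4 : Fin 16) : ℕ) = 4 from rfl, Fin.sum_univ_four]
      norm_num [h1, h2, Matrix.smul_apply, Complex.ext_iff, Matrix.cons_val_two,
          Matrix.cons_val_three, Matrix.head_cons, Matrix.vecHead, Matrix.vecTail]
    rw [hv, norm_div, norm_neg, Complex.norm_I]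
    norm_num
  · rw [show ((16 - 4 : ℝ) / (4 * 15)) = 1/5 by norm_num]
    rw [one_div, Real.sqrt_inv, one_div]
  · rw [div_lt_div_iff₀ (by positivity) (by norm_num)]
    nlinarith [Real.sq_sqrt (by norm_num : (5:ℝ) ≥ 0), Real.sqrt_nonneg 5]
end

section
/- For the SINR distribution F(γ) = 1 − exp(−mNγ/(ρ(1 − δ̂²γ))) on [0, 1/δ̂²), the growth function g(γ) = (1 − F(γ))/f(γ) = ρ(1−δ̂²γ)²/(mN) satisfies lim_{γ → (1/δ̂²)⁻} g′(γ) = 0; hence the von Mises condition holds and F lies in the domain of attraction of the Gumbel distribution H(γ) = exp(−e^{−γ}). -/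
open Filter

open Real in

lemma log_nat_nonneg (K : ℕ) : 0 ≤ Real.log K := by
  rcases K with _ | K
  · simp
  · exact Real.log_nonneg (by exact_mod_cast Nat.succ_le_succ (Nat.zero_le _))

lemma aux_pow_limit (u : ℕ → ℝ) (c : ℝ) (hc : 0 < c) (hu : ∀ K, 0 < u K)
    (h : Tendsto u atTop (nhds c)) :
    Tendsto (fun K : ℕ => (1 - u K / K) ^ K) atTop (nhds (Real.exp (-c))) := by
  -- v K = - u K / K tends to 0
  have hv : Tendsto (fun K : ℕ => -(u K / K)) atTop (nhds 0) := by
    have : Tendsto (fun K : ℕ => u K / K) atTop (nhds 0) :=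
      h.div_atTop (tendsto_natCast_atTop_atTop)
    simpa using this.neg
  -- slope of log at 1
  have hslope : Tendsto (fun K : ℕ => Real.log (1 + -(u K / K)) / (-(u K / K)))
      atTop (nhds 1) := by
    have hd : Tendsto (slope Real.log 1) (nhdsWithin 1 {(1:ℝ)}ᶜ) (nhds 1) := by
      have := hasDerivAt_iff_tendsto_slope.mp (Real.hasDerivAt_log (one_ne_zero))
      simpa using this
    have hmem : ∀ᶠ K : ℕ in atTop, (1 + -(u K / K)) ∈ ({(1:ℝ)}ᶜ : Set ℝ) := by
      filter_upwards [eventually_ge_atTop 1] with K hK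
      have hK0 : (0:ℝ) < K := by exact_mod_cast hK
      have : 0 < u K / K := div_pos (hu K) hK0
      simp only [Set.mem_compl_iff, Set.mem_singleton_iff]
      intro hcontra
      nlinarith
    have htend : Tendsto (fun K : ℕ => 1 + -(u K / K)) atTop
        (nhdsWithin 1 {(1:ℝ)}ᶜ) := by
      rw [tendsto_nhdsWithin_iff]
      constructor
      · simpa using (tendsto_const_nhds.add hv)
      · exact hmem
    have := hd.comp htend
    simp only [slope_def_field, Function.comp_def] at this
    refine this.congr (fun K => ?_)
    simp [slope_def_field]
  -- K * log (1 - u K / K) tends to -c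
  have hmain : Tendsto (fun K : ℕ => (K : ℝ) * Real.log (1 - u K / K)) atTop
      (nhds (-c)) := by
    have h2 : Tendsto (fun K : ℕ =>
        (Real.log (1 + -(u K / K)) / (-(u K / K))) * (-(u K))) atTop
        (nhds (1 * (-c))) := hslope.mul h.neg
    rw [one_mul] at h2
    refine h2.congr' ?_
    filter_upwards [eventually_ge_atTop 1] with K hK
    have hK0 : (0:ℝ) < K := by exact_mod_cast hK
    have hne : u K / (K:ℝ) ≠ 0 := ne_of_gt (div_pos (hu K) hK0)
    have hKeq : (-(u K)) / (-(u K / (K:ℝ))) = (K:ℝ) := by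
      field_simp
      exact div_self (ne_of_gt (hu K))
    calc Real.log (1 + -(u K / K)) / (-(u K / K)) * (-(u K))
        = Real.log (1 - u K / K) * ((-(u K)) / (-(u K / (K:ℝ)))) := by
          rw [show (1:ℝ) + -(u K / K) = 1 - u K / K by ring]
          ring
      _ = (K:ℝ) * Real.log (1 - u K / K) := by rw [hKeq]; ring
  -- eventually 1 - u K / K > 0
  have hpos : ∀ᶠ K : ℕ in atTop, 0 < 1 - u K / K := by
    have := hv.eventually (eventually_gt_nhds (by norm_num : (-1:ℝ) < 0))
    filter_upwards [this] with K hK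
    linarith
  have := (Real.continuous_exp.tendsto _).comp hmain
  refine this.congr' ?_
  filter_upwards [hpos] with K hK
  simp only [Function.comp]
  rw [← Real.exp_log hK, ← Real.exp_nat_mul, Real.exp_log hK]

open Real in
set_option maxHeartbeats 1000000 in
lemma key_alg (A E x δ2 ρ : ℝ) (hδ : δ2 ≠ 0) (hρ : ρ ≠ 0) (hA : A ≠ 0)
    (hE : E ≠ 0) (hx : 1 - E * x ≠ 0) :
    -((ρ * δ2 * A) * ((1 - A * E) / δ2 + A * E ^ 2 / δ2 * x)) /
      (ρ * (1 - δ2 * ((1 - A * E) / δ2 + A * E ^ 2 / δ2 * x)))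
      = -((1 - A * E) / E) + -(x / (1 - E * x)) := by
  have hden : 1 - δ2 * ((1 - A * E) / δ2 + A * E ^ 2 / δ2 * x) = A * E * (1 - E * x) := by
    field_simp
    ring
  rw [hden]
  have hDen : A * E * (1 - E * x) ≠ 0 := by
    exact mul_ne_zero (mul_ne_zero hA hE) hx
  field_simp
  ring

/-- Von Mises condition for the SINR distribution: the growth function
`g = (1−F)/f = ρ(1−δ²γ)²/(mN)` has derivative tending to `0` at the right endpoint
`1/δ²`, hence `F` is in the domain of attraction of the Gumbel law `exp(−e^{−γ})`. -/
theorem sinr_von_mises_gumbel (m ρ N δ2 : ℝ) (hm : 0 < m) (hρ : 0 < ρ) (hN : 0 < N)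
    (hδ : 0 < δ2) (F f g : ℝ → ℝ)
    (hF : ∀ γ, F γ = 1 - Real.exp (-(m * N * γ) / (ρ * (1 - δ2 * γ))))
    (hf : ∀ γ, f γ = m * N / (ρ * (1 - δ2 * γ) ^ 2)
      * Real.exp (-(m * N * γ) / (ρ * (1 - δ2 * γ))))
    (hg : ∀ γ, g γ = ρ * (1 - δ2 * γ) ^ 2 / (m * N)) :
    (∀ γ ∈ Set.Ico (0 : ℝ) (1 / δ2), (1 - F γ) / f γ = g γ) ∧
    Tendsto (deriv g) (nhdsWithin (1 / δ2) (Set.Iio (1 / δ2))) (nhds 0) ∧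
    ∃ a b : ℕ → ℝ, (∀ K, 0 < b K) ∧ ∀ x : ℝ,
      Tendsto (fun K : ℕ => (F (a K + b K * x)) ^ K) atTop
        (nhds (Real.exp (-Real.exp (-x)))) := by
  have hmN : 0 < m * N := mul_pos hm hN
  refine ⟨?_, ?_, ?_⟩
  · -- part 1
    intro γ ⟨hγ0, hγ1⟩
    have ht : 0 < 1 - δ2 * γ := by
      rw [lt_div_iff₀ hδ] at hγ1; nlinarith
    rw [hF, hf, hg]
    have he : Real.exp (-(m * N * γ) / (ρ * (1 - δ2 * γ))) ≠ 0 := Real.exp_ne_zero _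
    field_simp
    ring
  · -- part 2
    have hgfun : g = fun γ => ρ * (1 - δ2 * γ) ^ 2 / (m * N) := funext hg
    have hderiv : ∀ γ : ℝ, HasDerivAt g (ρ * (2 * (1 - δ2 * γ) * (-δ2)) / (m * N)) γ := by
      intro γ
      rw [hgfun]
      have h1 : HasDerivAt (fun γ : ℝ => 1 - δ2 * γ) (-δ2) γ := by
        simpa using ((hasDerivAt_id γ).const_mul δ2).const_sub 1
      have h2 : HasDerivAt (fun γ : ℝ => (1 - δ2 * γ) ^ 2) (2 * (1 - δ2 * γ) * (-δ2)) γ := by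
        simpa [mul_comm] using h1.fun_pow 2
      exact (h2.const_mul ρ).div_const (m * N)
    have hd : deriv g = fun γ => ρ * (2 * (1 - δ2 * γ) * (-δ2)) / (m * N) :=
      funext fun γ => (hderiv γ).deriv
    rw [hd]
    have hcont : Continuous fun γ : ℝ => ρ * (2 * (1 - δ2 * γ) * (-δ2)) / (m * N) := by
      continuity
    have htend : Tendsto (fun γ : ℝ => ρ * (2 * (1 - δ2 * γ) * (-δ2)) / (m * N))
        (nhdsWithin (1 / δ2) (Set.Iio (1 / δ2)))
        (nhds (ρ * (2 * (1 - δ2 * (1 / δ2)) * (-δ2)) / (m * N))) :=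
      (hcont.tendsto (1 / δ2)).mono_left nhdsWithin_le_nhds
    convert htend using 2
    rw [mul_one_div, div_self (ne_of_gt hδ)]
    ring
  · -- part 3
    set A : ℝ := m * N / (ρ * δ2) with hA
    have hApos : 0 < A := div_pos hmN (mul_pos hρ hδ)
    set ε : ℕ → ℝ := fun K => (Real.log K + A)⁻¹ with hε
    have hlogK : ∀ K : ℕ, 0 ≤ Real.log K := by
      intro K
      rcases K with _ | K
      · simp
      · exact Real.log_nonneg (by exact_mod_cast Nat.succ_le_succ (Nat.zero_le _))
    have hεpos : ∀ K, 0 < ε K := fun K => inv_pos.mpr (by linarith [hlogK K])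
    have hε0 : Tendsto ε atTop (nhds 0) := by
      apply Tendsto.inv_tendsto_atTop
      apply tendsto_atTop_add_const_right
      exact Real.tendsto_log_atTop.comp tendsto_natCast_atTop_atTop
    refine ⟨fun K => (1 - A * ε K) / δ2, fun K => A * (ε K) ^ 2 / δ2,
      fun K => div_pos (mul_pos hApos (pow_pos (hεpos K) 2)) hδ, fun x => ?_⟩
    -- eventual formula for F (a K + b K * x)
    have hev1 : ∀ᶠ K : ℕ in atTop, 1 - ε K * x > 0 := by
      have : Tendsto (fun K => ε K * x) atTop (nhds 0) := by
        simpa using hε0.mul_const x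
      have := this.eventually (eventually_lt_nhds (by norm_num : (0:ℝ) < 1))
      filter_upwards [this] with K hK; linarith
    have hform : ∀ᶠ K : ℕ in atTop,
        F ((1 - A * ε K) / δ2 + A * (ε K) ^ 2 / δ2 * x)
          = 1 - Real.exp (-(x / (1 - ε K * x))) / K := by
      filter_upwards [hev1, eventually_ge_atTop 1] with K hεx hK1
      have hK0 : (0:ℝ) < K := by exact_mod_cast hK1
      rw [hF]
      have hLA' : 0 < Real.log K + A := by linarith [hlogK K]
      have hmNeq : m * N = ρ * δ2 * A := by
        rw [hA]; field_simp
      have hLog : (1 - A * ε K) / ε K = Real.log K := by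
        rw [div_eq_iff (ne_of_gt (hεpos K)), hε]
        field_simp
        ring
      have hexp : -(m * N * ((1 - A * ε K) / δ2 + A * (ε K) ^ 2 / δ2 * x)) /
          (ρ * (1 - δ2 * ((1 - A * ε K) / δ2 + A * (ε K) ^ 2 / δ2 * x)))
          = -(Real.log K) + -(x / (1 - ε K * x)) := by
        rw [hmNeq, key_alg A (ε K) x δ2 ρ (ne_of_gt hδ) (ne_of_gt hρ)
          (ne_of_gt hApos) (ne_of_gt (hεpos K)) (ne_of_gt hεx), hLog]
      rw [hexp, Real.exp_add, Real.exp_neg, Real.exp_log hK0]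
      ring
    have h1 : Tendsto (fun K => 1 - ε K * x) atTop (nhds 1) := by
      simpa using (tendsto_const_nhds.sub (hε0.mul_const x))
    have h2 : Tendsto (fun K => x / (1 - ε K * x)) atTop (nhds x) := by
      simpa [Pi.div_def] using (Tendsto.div (tendsto_const_nhds : Tendsto (fun _ : ℕ => x) atTop (nhds x))
        h1 one_ne_zero)
    have hu : Tendsto (fun K => Real.exp (-(x / (1 - ε K * x)))) atTop
        (nhds (Real.exp (-x))) := (Real.continuous_exp.tendsto _).comp h2.neg
    have hmain := aux_pow_limit (fun K => Real.exp (-(x / (1 - ε K * x)))) (Real.exp (-x))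
      (Real.exp_pos _) (fun K => Real.exp_pos _) hu
    refine hmain.congr' ?_
    filter_upwards [hform] with K h
    rw [h]
end
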